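/- Let n ≥ 1 and let X be a multi-sorted topological structure in the signature of M̃_n. Define ≤ on X = X₀ ⊔ ⋯ ⊔ Xₙ by: x ≤ y iff either x,y ∈ X_k and x ≤ᵏ y for some k ∈ {0,…,n}, or x ∈ X_j, y ∈ X_k and x ≤ʲᵏ y for some 1 ≤ j < k ≤ n. Then X satisfies axioms (A4), (A5), (A6) and (A7) if and only if ⟨X; ≤, T⟩ is a Priestley space. -/
import Mathlib


/-!
STATEMENT 5: Let n ≥ 1 and let X be a multi-sorted topological structure in the
signature of M̃_n and let ≤ be the combined relation on X = X₀ ⊔ ⋯ ⊔ Xₙ (in our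
presentation, the combined relation r itself).  Then X satisfies axioms (A4),
(A5), (A6) and (A7) if and only if ⟨X; ≤, T⟩ is a Priestley space.
-/

namespace ExpandingBelnap
/-! ### Multi-sorted topological structures in the signature of the alter ego `M̃ₙ`

A multi-sorted topological structure `X = ⟨X₀ ⊔ ⋯ ⊔ Xₙ; {g_k}, {≤ᵏ}, {≤ʲᵏ}, T⟩` is
presented by a single carrier `C` (the disjoint union), a `sort` map `C → Fin (n+1)`
(each sort being clopen, which encodes the disjoint-union topology), a combined
operation `g : C → C` (equal to `g_k` on the sort-`k` part for `k ≥ 1` and to the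
identity on the sort-`0` part), and a combined relation `r : C → C → Prop`
(equal to `≤ᵏ` on pairs within sort `k` and to `≤ʲᵏ` on pairs from sort `j` to
sort `k` for `1 ≤ j < k`, and empty on all other pairs of sorts). -/

/-- `U` is an up-set for the relation `r`. -/
def IsUpset {C : Type} (r : C → C → Prop) (U : Set C) : Prop :=
  ∀ x ∈ U, ∀ y, r x y → y ∈ U

/-- `⟨C; r, T⟩` is a Priestley space: `r` is a partial order and the space is
compact and totally order-disconnected. -/
def IsPriestley (C : Type) [TopologicalSpace C] (r : C → C → Prop) : Prop :=
  (∀ x, r x x) ∧ (∀ x y, r x y → r y x → x = y) ∧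
    (∀ x y z, r x y → r y z → r x z) ∧ CompactSpace C ∧
    ∀ x y, ¬ r x y → ∃ U : Set C, IsClopen U ∧ IsUpset r U ∧ x ∈ U ∧ y ∉ U

/-- `(C, sort, g, r)` presents a multi-sorted topological structure in the signature
of `M̃ₙ`: the sorts are clopen (disjoint-union topology), `g` maps into sort `0` and
restricts to the identity on sort `0`, and the relation only relates pairs within a
sort or from sort `j` to sort `k` where `1 ≤ j < k`. -/
def IsMS {n : ℕ} {C : Type} [TopologicalSpace C]
    (sort : C → Fin (n + 1)) (g : C → C) (r : C → C → Prop) : Prop :=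
  (∀ k, IsClopen {x | sort x = k}) ∧
    (∀ x, sort (g x) = 0) ∧
    (∀ x, sort x = 0 → g x = x) ∧
    (∀ x y, r x y → sort x = sort y ∨ (0 < (sort x).val ∧ (sort x).val < (sort y).val))

/-- (A1): each `g_k : X_k → X₀` is continuous (`k ∈ [1, n]`). -/
def AxA1 {n : ℕ} {C : Type} [TopologicalSpace C]
    (sort : C → Fin (n + 1)) (g : C → C) : Prop :=
  ∀ k : Fin (n + 1), 0 < k.val → Continuous fun x : {x : C // sort x = k} => g x.1

/-- (A2): for `k ∈ [1, n]` and `x, y ∈ X_k`, `x ≤ᵏ y` implies `g_k x = g_k y`. -/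
def AxA2 {n : ℕ} {C : Type}
    (sort : C → Fin (n + 1)) (g : C → C) (r : C → C → Prop) : Prop :=
  ∀ x y, sort x = sort y → 0 < (sort x).val → r x y → g x = g y

/-- (A3): for `1 ≤ j < k`, `x ∈ X_j`, `y ∈ X_k`, `x ≤ʲᵏ y` implies `g_j x = g_k y`. -/
def AxA3 {n : ℕ} {C : Type}
    (sort : C → Fin (n + 1)) (g : C → C) (r : C → C → Prop) : Prop :=
  ∀ x y, 0 < (sort x).val → (sort x).val < (sort y).val → r x y → g x = g y

/-- (A4): for `1 ≤ j < k`, `x, y ∈ X_j`, `u, v ∈ X_k`: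
`x ≤ʲ y`, `y ≤ʲᵏ u`, `u ≤ᵏ v` imply `x ≤ʲᵏ v`. -/
def AxA4 {n : ℕ} {C : Type} (sort : C → Fin (n + 1)) (r : C → C → Prop) : Prop :=
  ∀ x y u v, 0 < (sort x).val → sort x = sort y → (sort y).val < (sort u).val →
    sort u = sort v → r x y → r y u → r u v → r x v

/-- (A5): for `1 ≤ j < k < l`, `x ∈ X_j`, `y ∈ X_k`, `z ∈ X_l`:
`x ≤ʲᵏ y` and `y ≤ᵏˡ z` imply `x ≤ʲˡ z`. -/
def AxA5 {n : ℕ} {C : Type} (sort : C → Fin (n + 1)) (r : C → C → Prop) : Prop :=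
  ∀ x y z, 0 < (sort x).val → (sort x).val < (sort y).val →
    (sort y).val < (sort z).val → r x y → r y z → r x z

/-- (A6): each `⟨X_k; ≤ᵏ, T_k⟩` is a Priestley space (`k ∈ [0, n]`). -/
def AxA6 {n : ℕ} {C : Type} [TopologicalSpace C]
    (sort : C → Fin (n + 1)) (r : C → C → Prop) : Prop :=
  ∀ k : Fin (n + 1), IsPriestley {x : C // sort x = k} fun a b => r a.1 b.1

/-- `U j, …, U k` is a mutually increasing family: each `U l` is a subset of `X_l`,
each `U l` is an up-set of `⟨X_l; ≤ˡ⟩`, and for `max(1,j) ≤ i ≤ l ≤ k`,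
`x ∈ U i`, `y ∈ X_l` and `x ≤ⁱˡ y` imply `y ∈ U l`. -/
def MutInc {n : ℕ} {C : Type} (sort : C → Fin (n + 1)) (r : C → C → Prop)
    (j k : Fin (n + 1)) (U : Fin (n + 1) → Set C) : Prop :=
  (∀ l, j ≤ l → l ≤ k → U l ⊆ {x | sort x = l}) ∧
    ∀ i l, j ≤ i → i ≤ l → l ≤ k → (i = l ∨ 0 < i.val) →
      ∀ x ∈ U i, ∀ y, sort y = l → r x y → y ∈ U l

/-- `U` is a clopen subset of the sort-`l` subspace `⟨X_l; T_l⟩`. -/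
def ClopenSort {n : ℕ} {C : Type} [TopologicalSpace C]
    (sort : C → Fin (n + 1)) (l : Fin (n + 1)) (U : Set C) : Prop :=
  IsClopen {z : {x : C // sort x = l} | z.1 ∈ U}

/-- (A7): for `1 ≤ j < k`, `x ∈ X_j`, `y ∈ X_k` with `x ≰ʲᵏ y`, there is a mutually
increasing family of clopen up-sets `U j, …, U k` with `x ∈ U j` and `y ∉ U k`. -/
def AxA7 {n : ℕ} {C : Type} [TopologicalSpace C]
    (sort : C → Fin (n + 1)) (r : C → C → Prop) : Prop :=
  ∀ j k : Fin (n + 1), 0 < j.val → j < k → ∀ x y, sort x = j → sort y = k → ¬ r x y →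
    ∃ U : Fin (n + 1) → Set C, MutInc sort r j k U ∧
      (∀ l, j ≤ l → l ≤ k → ClopenSort sort l (U l)) ∧ x ∈ U j ∧ y ∉ U k

/-- The conjunction of axioms (A1)–(A7). -/
def AxiomsA {n : ℕ} {C : Type} [TopologicalSpace C]
    (sort : C → Fin (n + 1)) (g : C → C) (r : C → C → Prop) : Prop :=
  AxA1 sort g ∧ AxA2 sort g r ∧ AxA3 sort g r ∧ AxA4 sort r ∧ AxA5 sort r ∧
    AxA6 sort r ∧ AxA7 sort r

lemma clopen_of_clopen_subtype {C : Type} [TopologicalSpace C] {A S : Set C}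
    (hA : IsClopen A) (hS : S ⊆ A) (h : IsClopen {z : A | z.1 ∈ S}) : IsClopen S := by
  obtain ⟨hc, ho⟩ := h
  rw [isClosed_induced_iff] at hc
  rw [isOpen_induced_iff] at ho
  obtain ⟨F, hF, hFe⟩ := hc
  obtain ⟨O, hO, hOe⟩ := ho
  have hSF : S = F ∩ A := by
    ext z
    constructor
    · intro hz
      have hzA := hS hz
      have : (⟨z, hzA⟩ : A) ∈ Subtype.val ⁻¹' F := by rw [hFe]; exact hz
      exact ⟨this, hzA⟩
    · rintro ⟨hzF, hzA⟩
      have : (⟨z, hzA⟩ : A) ∈ Subtype.val ⁻¹' F := hzF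
      rw [hFe] at this; exact this
  have hSO : S = O ∩ A := by
    ext z
    constructor
    · intro hz
      have hzA := hS hz
      have : (⟨z, hzA⟩ : A) ∈ Subtype.val ⁻¹' O := by rw [hOe]; exact hz
      exact ⟨this, hzA⟩
    · rintro ⟨hzO, hzA⟩
      have : (⟨z, hzA⟩ : A) ∈ Subtype.val ⁻¹' O := hzO
      rw [hOe] at this; exact this
  exact ⟨hSF ▸ hF.inter hA.1, hSO ▸ hO.inter hA.2⟩

lemma clopen_iUnion_fin {C : Type} [TopologicalSpace C] {ι : Type} [Finite ι]
    {W : ι → Set C} (h : ∀ i, IsClopen (W i)) : IsClopen (⋃ i, W i) :=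
  ⟨isClosed_iUnion_of_finite fun i => (h i).1, isOpen_iUnion fun i => (h i).2⟩

lemma clopen_sort_pred {n : ℕ} {C : Type} [TopologicalSpace C] {sort : C → Fin (n + 1)}
    (hcl : ∀ k, IsClopen {x | sort x = k}) (p : Fin (n + 1) → Prop) [DecidablePred p] :
    IsClopen {z | p (sort z)} := by
  have he : {z | p (sort z)} = ⋃ i, if p i then {x | sort x = i} else ∅ := by
    ext z
    simp only [Set.mem_setOf_eq, Set.mem_iUnion]
    constructor
    · intro hz; exact ⟨sort z, by simp [hz]⟩
    · rintro ⟨i, hi⟩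
      by_cases hpi : p i
      · simp only [if_pos hpi] at hi; exact hi ▸ hpi
      · simp [if_neg hpi] at hi
  rw [he]
  apply clopen_iUnion_fin
  intro i
  split
  · exact hcl i
  · exact isClopen_empty

theorem statement5 (n : ℕ) (hn : 1 ≤ n) (C : Type) [TopologicalSpace C]
    (sort : C → Fin (n + 1)) (g : C → C) (r : C → C → Prop)
    (hMS : IsMS sort g r) :
    (AxA4 sort r ∧ AxA5 sort r ∧ AxA6 sort r ∧ AxA7 sort r) ↔
      IsPriestley C r := by
  obtain ⟨hclop, -, -, hsorts⟩ := hMS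
  constructor
  · rintro ⟨h4, h5, h6, h7⟩
    have hrefl : ∀ x, r x x := fun x => (h6 (sort x)).1 ⟨x, rfl⟩
    refine ⟨hrefl, ?_, ?_, ?_, ?_⟩
    · -- antisymmetry
      intro x y hxy hyx
      rcases hsorts x y hxy with hs | ⟨h1, h2⟩
      · have := (h6 (sort x)).2.1 ⟨x, rfl⟩ ⟨y, hs.symm⟩ hxy hyx
        exact congrArg Subtype.val this
      · rcases hsorts y x hyx with hs' | ⟨h1', h2'⟩
        · rw [hs'] at h2; exact absurd h2 (lt_irrefl _)
        · exact absurd h2 (not_lt.mpr (le_of_lt h2'))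
    · -- transitivity
      intro x y z hxy hyz
      rcases hsorts x y hxy with hs | ⟨h1, h2⟩
      · rcases hsorts y z hyz with hs' | ⟨h1', h2'⟩
        · -- same sort throughout
          have := (h6 (sort x)).2.2.1 ⟨x, rfl⟩ ⟨y, hs.symm⟩ ⟨z, (hs.trans hs').symm⟩ hxy hyz
          exact this
        · -- equal then up: A4 with u = v = z
          exact h4 x y z z (hs ▸ h1') hs (hs ▸ h2') rfl hxy hyz (hrefl z)
      · rcases hsorts y z hyz with hs' | ⟨h1', h2'⟩
        · -- up then equal: A4 with x x y z
          exact h4 x x y z h1 rfl h2 hs' (hrefl x) hxy hyz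
        · exact h5 x y z h1 h2 h2' hxy hyz
    · -- compactness
      have hcomp : ∀ k, IsCompact {x : C | sort x = k} := fun k =>
        isCompact_iff_compactSpace.mpr (h6 k).2.2.2.1
      have huniv : (Set.univ : Set C) = ⋃ k, {x | sort x = k} := by
        ext x; simp only [Set.mem_univ, Set.mem_iUnion, Set.mem_setOf_eq, true_iff]
        exact ⟨sort x, rfl⟩
      exact isCompact_univ_iff.mp (huniv ▸ isCompact_iUnion hcomp)
    · -- separation
      intro x y hxy
      by_cases hjk : sort x = sort y
      · -- same sort
        obtain ⟨W, hWc, hWu, hxW, hyW⟩ := (h6 (sort x)).2.2.2.2 ⟨x, rfl⟩ ⟨y, hjk.symm⟩ hxy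
        refine ⟨(Subtype.val '' W) ∪ {z | (sort x).val < (sort z).val}, ?_, ?_, ?_, ?_⟩
        · apply IsClopen.union
          · apply clopen_of_clopen_subtype (hclop (sort x))
            · rintro z ⟨w, -, rfl⟩; exact w.2
            · have : {z : {x_1 : C | sort x_1 = sort x} | z.1 ∈ Subtype.val '' W} = W := by
                ext z; simp [Subtype.val_injective.mem_set_image]
              exact this.symm ▸ hWc
          · exact clopen_sort_pred hclop (fun i => (sort x).val < i.val)
        · intro z hz z' hrz
          rcases hz with ⟨w, hwW, rfl⟩ | hz
          · rcases hsorts w.1 z' hrz with hs | ⟨-, h2⟩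
            · have hz'W : (⟨z', (hs ▸ w.2 : sort z' = sort x)⟩ :
                  {x_1 : C // sort x_1 = sort x}) ∈ W := by
                have := hWu ⟨w.1, w.2⟩ hwW ⟨z', hs ▸ w.2⟩ hrz
                exact this
              exact Or.inl ⟨_, hz'W, rfl⟩
            · exact Or.inr (by have := w.2; simp only [Set.mem_setOf_eq]; omega)
          · rcases hsorts z z' hrz with hs | ⟨-, h2⟩
            · refine Or.inr ?_
              have hv := congrArg Fin.val hs
              simp only [Set.mem_setOf_eq] at hz ⊢
              omega
            · exact Or.inr (lt_trans hz h2)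
        · exact Or.inl ⟨⟨x, rfl⟩, hxW, rfl⟩
        · rintro (⟨w, hwW, hwy⟩ | hy)
          · have : w = ⟨y, hjk.symm⟩ := Subtype.ext hwy
            exact hyW (this ▸ hwW)
          · have hv := congrArg Fin.val hjk
            simp only [Set.mem_setOf_eq] at hy
            omega
      · by_cases hcross : 0 < (sort x).val ∧ (sort x).val < (sort y).val
        · -- use A7
          obtain ⟨U, ⟨hMI1, hMI2⟩, hCl, hxU, hyU⟩ := h7 (sort x) (sort y) hcross.1
            (Fin.lt_def.mpr hcross.2) x y rfl rfl hxy
          refine ⟨{z | ∃ i, sort x ≤ i ∧ i ≤ sort y ∧ sort z = i ∧ z ∈ U i} ∪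
            {z | (sort y).val < (sort z).val}, ?_, ?_, ?_, ?_⟩
          · apply IsClopen.union
            · have he : {z | ∃ i, sort x ≤ i ∧ i ≤ sort y ∧ sort z = i ∧ z ∈ U i} =
                  ⋃ i, if h : sort x ≤ i ∧ i ≤ sort y then {z | sort z = i ∧ z ∈ U i} else ∅ := by
                ext z
                simp only [Set.mem_setOf_eq, Set.mem_iUnion]
                constructor
                · rintro ⟨i, h1, h2, h3, h4⟩
                  exact ⟨i, by rw [dif_pos ⟨h1, h2⟩]; exact ⟨h3, h4⟩⟩
                · rintro ⟨i, hi⟩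
                  by_cases hh : sort x ≤ i ∧ i ≤ sort y
                  · rw [dif_pos hh] at hi; exact ⟨i, hh.1, hh.2, hi.1, hi.2⟩
                  · rw [dif_neg hh] at hi; exact absurd hi (Set.notMem_empty z)
              rw [he]
              apply clopen_iUnion_fin
              intro i
              split
              · rename_i hh
                apply clopen_of_clopen_subtype (hclop i)
                · intro z hz; exact hz.1
                · have : {z : {x_1 : C | sort x_1 = i} | z.1 ∈ {z | sort z = i ∧ z ∈ U i}} =
                      {z : {x_1 : C | sort x_1 = i} | z.1 ∈ U i} := by
                    ext z; simp only [Set.mem_setOf_eq]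
                    exact ⟨fun h => h.2, fun h => ⟨z.2, h⟩⟩
                  exact this ▸ hCl i hh.1 hh.2
              · exact isClopen_empty
            · exact clopen_sort_pred hclop (fun i => (sort y).val < i.val)
          · intro z hz z' hrz
            rcases hz with ⟨i, hxi, hiy, hzi, hzU⟩ | hz
            · rcases hsorts z z' hrz with hs | ⟨h1, h2⟩
              · refine Or.inl ⟨i, hxi, hiy, hs ▸ hzi, ?_⟩
                exact hMI2 i i hxi (le_refl i) hiy (Or.inl rfl) z hzU z' (hs ▸ hzi) hrz
              · by_cases hle : (sort z').val ≤ (sort y).val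
                · refine Or.inl ⟨sort z', ?_, Fin.le_def.mpr hle, rfl, ?_⟩
                  · rw [Fin.le_def]; rw [hzi] at h2
                    have := Fin.le_def.mp hxi; omega
                  · refine hMI2 i (sort z') hxi ?_ (Fin.le_def.mpr hle) (Or.inr ?_) z hzU z' rfl hrz
                    · rw [Fin.le_def]; rw [hzi] at h2; omega
                    · rw [← hzi]; rw [hzi] at h1 ⊢
                      have := Fin.le_def.mp hxi
                      have := hcross.1; omega
                · exact Or.inr (by simp only [Set.mem_setOf_eq]; omega)
            · rcases hsorts z z' hrz with hs | ⟨-, h2⟩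
              · refine Or.inr ?_
                have hv := congrArg Fin.val hs
                simp only [Set.mem_setOf_eq] at hz ⊢
                omega
              · exact Or.inr (lt_trans hz h2)
          · exact Or.inl ⟨sort x, le_refl _, le_of_lt (Fin.lt_def.mpr hcross.2), rfl, hxU⟩
          · rintro (⟨i, hxi, hiy, hyi, hyUi⟩ | hy)
            · have : i = sort y := hyi.symm
              exact hyU (this ▸ hyUi)
            · simp only [Set.mem_setOf_eq] at hy
              omega
        · by_cases hj0 : (sort x).val = 0
          · refine ⟨{z | sort z = sort x}, hclop _, ?_, rfl, fun h => hjk (h.symm)⟩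
            intro z hz z' hrz
            rcases hsorts z z' hrz with hs | ⟨h1, -⟩
            · simp only [Set.mem_setOf_eq] at hz ⊢
              rw [← hs]; exact hz
            · rw [Set.mem_setOf_eq] at hz; rw [hz, hj0] at h1; exact absurd h1 (lt_irrefl _)
          · have hj1 : 0 < (sort x).val := Nat.pos_of_ne_zero hj0
            have hky : (sort y).val < (sort x).val := by
              have h1 : ¬ (sort x).val < (sort y).val := fun h => hcross ⟨hj1, h⟩
              have h2 : (sort x).val ≠ (sort y).val := fun h => hjk (Fin.ext h)
              omega
            refine ⟨{z | (sort x).val ≤ (sort z).val},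
              clopen_sort_pred hclop (fun i => (sort x).val ≤ i.val), ?_, ?_, ?_⟩
            · intro z hz z' hrz
              rcases hsorts z z' hrz with hs | ⟨-, h2⟩
              · have hv := congrArg Fin.val hs
                rw [Set.mem_setOf_eq] at hz ⊢; omega
              · rw [Set.mem_setOf_eq] at hz ⊢; omega
            · show (sort x).val ≤ (sort x).val
              exact le_refl _
            · rw [Set.mem_setOf_eq]; omega
  · rintro ⟨P1, P2, P3, P4, P5⟩
    refine ⟨?_, ?_, ?_, ?_⟩
    · intro x y u v _ _ _ _ h1 h2 h3; exact P3 _ _ _ (P3 _ _ _ h1 h2) h3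
    · intro x y z _ _ _ h1 h2; exact P3 _ _ _ h1 h2
    · intro k
      refine ⟨fun a => P1 a.1, fun a b h1 h2 => Subtype.ext (P2 _ _ h1 h2),
        fun a b c h1 h2 => P3 _ _ _ h1 h2, ?_, ?_⟩
      · have : IsCompact {x : C | sort x = k} := (hclop k).1.isCompact
        exact isCompact_iff_compactSpace.mp this
      · intro a b hab
        obtain ⟨U, hU, hUu, ha, hb⟩ := P5 a.1 b.1 hab
        exact ⟨{z | z.1 ∈ U}, hU.preimage continuous_subtype_val,
          fun p hp q hq => hUu p.1 hp q.1 hq, ha, hb⟩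
    · intro j k hj hjk x y hx hy hxy
      obtain ⟨U, hU, hUu, hxU, hyU⟩ := P5 x y hxy
      refine ⟨fun l => U ∩ {z | sort z = l}, ⟨fun l _ _ z hz => hz.2, ?_⟩, ?_, ⟨hxU, hx⟩,
        fun h => hyU h.1⟩
      · intro i l _ _ _ _ z hz w hw hr
        exact ⟨hUu z hz.1 w hr, hw⟩
      · intro l _ _
        show IsClopen {z : {x_1 : C // sort x_1 = l} | z.1 ∈ U ∩ {z | sort z = l}}
        have heq : {z : {x_1 : C // sort x_1 = l} | z.1 ∈ U ∩ {z | sort z = l}} =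
            {z : {x_1 : C // sort x_1 = l} | z.1 ∈ U} := by
          ext z; exact ⟨fun h => h.1, fun h => ⟨h, z.2⟩⟩
        rw [heq]
        exact hU.preimage continuous_subtype_val


end ExpandingBelnap
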